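/- Let Γ be a distance-regular graph with valency k such that for some vertex x the complement of the local graph Δ(x) is the line graph of a t-regular graph Σ with t ≥ 2. Then the intersection number c₂ of Γ satisfies c₂ ≥ k − 3t + 3. -/

import Mathlib

open SimpleGraph Finset

/-- A distance-regular graph with diameter `D` and intersection numbers `b i`, `c i`. -/
structure SimpleGraph.IsDRG {V : Type*} [Fintype V] [DecidableEq V]
    (G : SimpleGraph V) [DecidableRel G.Adj] (D : ℕ) (b c : ℕ → ℕ) : Prop where
  connected : G.Connected
  dist_le : ∀ x y : V, G.dist x y ≤ D
  exists_dist : ∃ x y : V, G.dist x y = D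
  b_eq : ∀ i ≤ D, ∀ x y : V, G.dist x y = i →
    ((G.neighborFinset y).filter (fun z => G.dist x z = i + 1)).card = b i
  c_eq : ∀ i ≤ D, ∀ x y : V, G.dist x y = i →
    ((G.neighborFinset y).filter (fun z => G.dist x z + 1 = i)).card = c i
  b_last : b D = 0
  c_zero : c 0 = 0

/-- The second largest eigenvalue of the real symmetric matrix `A` is at most `t`:
all eigenvalues except (possibly) one are at most `t`. -/
def Matrix.SecondEigLE {n : Type*} [Fintype n] [DecidableEq n]
    (A : Matrix n n ℝ) (t : ℝ) : Prop :=
  ∀ hA : A.IsHermitian, ∃ i, ∀ j, j ≠ i → hA.eigenvalues j ≤ t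

instance {V : Type*} (G : SimpleGraph V) [DecidableRel G.Adj] (s : Set V) :
    DecidableRel (G.induce s).Adj := fun a b => inferInstanceAs (Decidable (G.Adj a b))

/-- The local graph of `G` at `x`: the subgraph induced on the neighbours of `x`. -/
abbrev SimpleGraph.localGraph {V : Type*} [Fintype V] [DecidableEq V]
    (G : SimpleGraph V) [DecidableRel G.Adj] (x : V) : SimpleGraph (G.neighborSet x) :=
  G.induce (G.neighborSet x)

/-! ### Auxiliary lemmas -/

instance lineAdjDec {W : Type*} [Fintype W] [DecidableEq W] (S : SimpleGraph W) :
    DecidableRel S.lineGraph.Adj := fun e f =>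
  decidable_of_iff (e ≠ f ∧ ∃ v, v ∈ (e : Sym2 W) ∧ v ∈ (f : Sym2 W))
    (SimpleGraph.lineGraph_adj_iff_exists).symm

lemma sum_card_filter_adj_comm {α : Type*} [DecidableEq α] (L : SimpleGraph α)
    [DecidableRel L.Adj] (A B : Finset α) :
    ∑ a ∈ A, (B.filter (fun b => L.Adj a b)).card
      = ∑ b ∈ B, (A.filter (fun a => L.Adj b a)).card := by
  simp_rw [Finset.card_filter]
  rw [Finset.sum_comm]
  exact Finset.sum_congr rfl fun b _ => Finset.sum_congr rfl fun a _ => by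
    simp [SimpleGraph.adj_comm]

lemma card_common_nonnbrs {α : Type*} [Fintype α] [DecidableEq α] (L : SimpleGraph α)
    [DecidableRel L.Adj] {p q : α} (hpq : p ≠ q) (hnadj : ¬ L.Adj p q) :
    ((univ : Finset α).filter (fun e => (e ≠ p ∧ ¬L.Adj p e) ∧ (e ≠ q ∧ ¬L.Adj q e))).card
      + ((L.neighborFinset p ∪ L.neighborFinset q).card + 2) = Fintype.card α := by
  have h1 : (univ : Finset α).filter (fun e => ¬((e ≠ p ∧ ¬L.Adj p e) ∧ (e ≠ q ∧ ¬L.Adj q e)))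
      = insert p (insert q (L.neighborFinset p ∪ L.neighborFinset q)) := by
    ext e
    simp only [mem_filter, mem_univ, true_and, mem_insert, mem_union, mem_neighborFinset]
    tauto
  have h2 := Finset.card_filter_add_card_filter_not
    (s := (univ : Finset α))
    (p := fun e => (e ≠ p ∧ ¬L.Adj p e) ∧ (e ≠ q ∧ ¬L.Adj q e))
  rw [h1] at h2
  have hqn : q ∉ L.neighborFinset p ∪ L.neighborFinset q := by
    simp only [mem_union, mem_neighborFinset]
    push_neg
    exact ⟨fun h => hnadj h, fun h => L.irrefl h⟩
  have hpn : p ∉ insert q (L.neighborFinset p ∪ L.neighborFinset q) := by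
    simp only [mem_insert, mem_union, mem_neighborFinset]
    push_neg
    exact ⟨hpq, fun h => L.irrefl h, fun h => hnadj h.symm⟩
  rw [Finset.card_insert_of_notMem hpn, Finset.card_insert_of_notMem hqn] at h2
  simp only [Finset.card_univ] at h2
  omega

lemma card_edges_through {W : Type*} [Fintype W] [DecidableEq W] (S : SimpleGraph W)
    [DecidableRel S.Adj] (p : W) :
    ((univ : Finset S.edgeSet).filter (fun f => p ∈ (f.val : Sym2 W))).card = S.degree p := by
  rw [← S.card_incidenceFinset_eq_degree]
  apply Finset.card_bij (fun (f : S.edgeSet) _ => (f : Sym2 W))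
  · intro f hf
    rw [mem_incidenceFinset]
    exact ⟨f.2, (mem_filter.mp hf).2⟩
  · intro f _ g _ h
    exact Subtype.ext h
  · intro e he
    rw [mem_incidenceFinset] at he
    exact ⟨⟨e, he.1⟩, mem_filter.mpr ⟨mem_univ _, he.2⟩, rfl⟩

lemma lineGraph_card_neighborFinset {W : Type*} [Fintype W] [DecidableEq W]
    (S : SimpleGraph W) [DecidableRel S.Adj] {t : ℕ} (hreg : S.IsRegularOfDegree t)
    (e : S.edgeSet) :
    (S.lineGraph.neighborFinset e).card + 2 = 2 * t := by
  obtain ⟨ev, he⟩ := e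
  induction ev using Sym2.inductionOn with
  | hf u v =>
    have hadj : S.Adj u v := S.mem_edgeSet.mp he
    have hne : u ≠ v := hadj.ne
    set Iu : Finset S.edgeSet := univ.filter (fun f => u ∈ (f.val : Sym2 W)) with hIu
    set Iv : Finset S.edgeSet := univ.filter (fun f => v ∈ (f.val : Sym2 W)) with hIv
    set e : S.edgeSet := ⟨s(u, v), he⟩ with hee
    have hN : S.lineGraph.neighborFinset e = (Iu ∪ Iv).erase e := by
      ext f
      rw [mem_neighborFinset, SimpleGraph.lineGraph_adj_iff_exists]
      simp only [mem_erase, mem_union, hIu, hIv, mem_filter, mem_univ, true_and]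
      constructor
      · rintro ⟨hne', w, hw1, hw2⟩
        refine ⟨fun h => hne' h.symm, ?_⟩
        have : w = u ∨ w = v := by
          have : w ∈ (e.val : Sym2 W) := hw1
          rw [hee] at this
          exact Sym2.mem_iff.mp this
        rcases this with h | h <;> [left; right] <;> rw [← h] <;> exact hw2
      · rintro ⟨hne', h⟩
        refine ⟨fun h' => hne' h'.symm, ?_⟩
        rcases h with h | h
        · exact ⟨u, Sym2.mem_mk_left u v, h⟩
        · exact ⟨v, Sym2.mem_mk_right u v, h⟩
    have hIuv : Iu ∩ Iv = {e} := by
      ext f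
      simp only [mem_inter, hIu, hIv, mem_filter, mem_univ, true_and, mem_singleton]
      rw [Sym2.mem_and_mem_iff hne]
      constructor
      · intro h; exact Subtype.ext (by rw [h, hee])
      · intro h; rw [h, hee]
    have hcu : Iu.card = t := by rw [hIu, card_edges_through]; exact hreg u
    have hcv : Iv.card = t := by rw [hIv, card_edges_through]; exact hreg v
    have hunion : (Iu ∪ Iv).card + 1 = 2 * t := by
      have := Finset.card_union_add_card_inter Iu Iv
      rw [hIuv, hcu, hcv, Finset.card_singleton] at this
      omega
    have hemem : e ∈ Iu ∪ Iv := by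
      rw [mem_union, hIu, mem_filter]
      exact Or.inl ⟨mem_univ _, by rw [hee]; exact Sym2.mem_mk_left u v⟩
    rw [hN, Finset.card_erase_of_mem hemem]
    have : 1 ≤ (Iu ∪ Iv).card := Finset.card_pos.mpr ⟨e, hemem⟩
    omega

lemma lineGraph_sum_common_bound {W : Type*} [Fintype W] [DecidableEq W]
    (S : SimpleGraph W) [DecidableRel S.Adj] {t : ℕ} (hreg : S.IsRegularOfDegree t)
    (z : S.edgeSet) :
    ∑ w ∈ (univ : Finset S.edgeSet).filter (fun w => w ≠ z ∧ ¬S.lineGraph.Adj z w),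
        (S.lineGraph.neighborFinset z ∩ S.lineGraph.neighborFinset w).card
      ≤ (S.lineGraph.neighborFinset z).card * (t - 1) := by
  set L := S.lineGraph with hLdef
  set A := (univ : Finset S.edgeSet).filter (fun w => w ≠ z ∧ ¬L.Adj z w) with hA
  have h1 : ∀ w : S.edgeSet, (L.neighborFinset z ∩ L.neighborFinset w).card
      = ((L.neighborFinset z).filter (fun g => L.Adj w g)).card := by
    intro w
    congr 1
    ext g
    simp only [mem_inter, mem_filter, mem_neighborFinset]
  calc ∑ w ∈ A, (L.neighborFinset z ∩ L.neighborFinset w).card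
      = ∑ w ∈ A, ((L.neighborFinset z).filter (fun g => L.Adj w g)).card :=
        Finset.sum_congr rfl fun w _ => h1 w
    _ = ∑ g ∈ L.neighborFinset z, (A.filter (fun w => L.Adj g w)).card :=
        sum_card_filter_adj_comm L A (L.neighborFinset z)
    _ ≤ ∑ _g ∈ L.neighborFinset z, (t - 1) := by
        apply Finset.sum_le_sum
        intro g hg
        have hzg : L.Adj z g := (mem_neighborFinset _ _ _).mp hg
        obtain ⟨hzgne, a, haz, hag⟩ := lineGraph_adj_iff_exists.mp hzg
        have hgd : ¬ (g.val).IsDiag := S.not_isDiag_of_mem_edgeSet g.2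
        have hpg : Sym2.Mem.other hag ∈ (g.val : Sym2 W) := Sym2.other_mem hag
        set p := Sym2.Mem.other hag with hp
        have hpa : p ≠ a := Sym2.other_ne hgd hag
        have hgspec : s(a, p) = (g.val : Sym2 W) := Sym2.other_spec hag
        have hpz : p ∉ (z.val : Sym2 W) := by
          intro hpzz
          have hz' : (z.val : Sym2 W) = s(a, p) :=
            (Sym2.mem_and_mem_iff (Ne.symm hpa)).mp ⟨haz, hpzz⟩
          exact hzgne (Subtype.ext (by rw [hz', hgspec]))
        have hsub : A.filter (fun w => L.Adj g w) ⊆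
            ((univ : Finset S.edgeSet).filter (fun f => p ∈ (f.val : Sym2 W))).erase g := by
          intro w hw
          simp only [hA, mem_filter, mem_univ, true_and] at hw
          obtain ⟨⟨hwz, hwnadj⟩, hgw⟩ := hw
          obtain ⟨hgwne, q, hqg, hqw⟩ := lineGraph_adj_iff_exists.mp hgw
          have hq : q = a ∨ q = p := by
            have hq' : q ∈ s(a, p) := by rw [hgspec]; exact hqg
            exact Sym2.mem_iff.mp hq'
          rcases hq with rfl | rfl
          · exact absurd (lineGraph_adj_iff_exists.mpr ⟨Ne.symm hwz, q, haz, hqw⟩) hwnadj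
          · rw [mem_erase]
            exact ⟨Ne.symm hgwne, mem_filter.mpr ⟨mem_univ _, hqw⟩⟩
        have hgmem : g ∈ (univ : Finset S.edgeSet).filter
            (fun f => p ∈ (f.val : Sym2 W)) := mem_filter.mpr ⟨mem_univ _, hpg⟩
        have hcard : (((univ : Finset S.edgeSet).filter
            (fun f => p ∈ (f.val : Sym2 W))).erase g).card = t - 1 := by
          rw [Finset.card_erase_of_mem hgmem, card_edges_through, hreg p]
        calc (A.filter (fun w => L.Adj g w)).card ≤ _ := Finset.card_le_card hsub
          _ = t - 1 := hcard
    _ = (L.neighborFinset z).card * (t - 1) := by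
        rw [Finset.sum_const, smul_eq_mul]

theorem c2_lower_bound_of_compl_local_lineGraph_regular
    {V W : Type*} [Fintype V] [DecidableEq V] [Fintype W] [DecidableEq W]
    (G : SimpleGraph V) [DecidableRel G.Adj] (D : ℕ) (b c : ℕ → ℕ) (hD : 2 ≤ D)
    (hG : G.IsDRG D b c) (x : V)
    (S : SimpleGraph W) [DecidableRel S.Adj] (t : ℕ) (ht : 2 ≤ t)
    (hreg : S.IsRegularOfDegree t)
    (hiso : Nonempty ((G.localGraph x)ᶜ ≃g S.lineGraph)) :
    (b 0 : ℤ) - 3 * t + 3 ≤ (c 2 : ℤ) := by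
  classical
  obtain ⟨φ⟩ := hiso
  have hconn := hG.connected
  set L := S.lineGraph with hL
  -- G is regular of valency b 0
  have hdeg : ∀ v : V, G.degree v = b 0 := by
    intro v
    have h := hG.b_eq 0 (by omega) v v (by rw [SimpleGraph.dist_self])
    have heq : (G.neighborFinset v).filter (fun w => G.dist v w = 0 + 1)
        = G.neighborFinset v := by
      apply Finset.filter_eq_self.mpr
      intro w hw
      simpa using SimpleGraph.dist_eq_one_iff_adj.mpr ((G.mem_neighborFinset v w).mp hw)
    rw [heq] at h
    rw [← h]
    rfl
  -- common neighbours of adjacent pairs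
  have hcomm : ∀ u w : V, G.Adj u w →
      ((G.neighborFinset w).filter (fun v => G.Adj u v)).card + 1 + b 1 = b 0 := by
    intro u w huw
    have hduw : G.dist u w = 1 := SimpleGraph.dist_eq_one_iff_adj.mpr huw
    have hb1 := hG.b_eq 1 (by omega) u w hduw
    have hcases : ∀ v ∈ G.neighborFinset w, G.dist u v = 0 ∨ G.dist u v = 1 ∨ G.dist u v = 2 := by
      intro v hv
      have h1 : G.dist u v ≤ G.dist u w + G.dist w v := hconn.dist_triangle
      have h2 : G.dist w v = 1 :=
        SimpleGraph.dist_eq_one_iff_adj.mpr ((G.mem_neighborFinset w v).mp hv)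
      omega
    have hsplit : G.neighborFinset w =
        ((G.neighborFinset w).filter (fun v => G.dist u v = 0) ∪
          (G.neighborFinset w).filter (fun v => G.dist u v = 1)) ∪
          (G.neighborFinset w).filter (fun v => G.dist u v = 1 + 1) := by
      ext v
      simp only [mem_union, mem_filter]
      constructor
      · intro hv
        rcases hcases v hv with h | h | h
        · exact Or.inl (Or.inl ⟨hv, h⟩)
        · exact Or.inl (Or.inr ⟨hv, h⟩)
        · exact Or.inr ⟨hv, by omega⟩
      · rintro ((⟨hv, _⟩ | ⟨hv, _⟩) | ⟨hv, _⟩) <;> exact hv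
    have hd1 : Disjoint ((G.neighborFinset w).filter (fun v => G.dist u v = 0))
        ((G.neighborFinset w).filter (fun v => G.dist u v = 1)) := by
      rw [Finset.disjoint_left]
      intro v h1 h2
      simp only [mem_filter] at h1 h2
      omega
    have hd2 : Disjoint (((G.neighborFinset w).filter (fun v => G.dist u v = 0)) ∪
        ((G.neighborFinset w).filter (fun v => G.dist u v = 1)))
        ((G.neighborFinset w).filter (fun v => G.dist u v = 1 + 1)) := by
      rw [Finset.disjoint_left]
      intro v h1 h2
      simp only [mem_union, mem_filter] at h1 h2
      rcases h1 with h | h <;> omega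
    have hcard := congrArg Finset.card hsplit
    rw [Finset.card_union_of_disjoint hd2, Finset.card_union_of_disjoint hd1] at hcard
    have h0 : ((G.neighborFinset w).filter (fun v => G.dist u v = 0)) = {u} := by
      ext v
      simp only [mem_filter, mem_singleton, mem_neighborFinset]
      constructor
      · rintro ⟨_, h⟩
        exact (hconn.dist_eq_zero_iff.mp h).symm
      · rintro rfl
        exact ⟨huw.symm, SimpleGraph.dist_self⟩
    have h1' : ((G.neighborFinset w).filter (fun v => G.dist u v = 1)) =
        (G.neighborFinset w).filter (fun v => G.Adj u v) :=
      Finset.filter_congr fun v _ => by simp [SimpleGraph.dist_eq_one_iff_adj]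
    have hdw : (G.neighborFinset w).card = b 0 := by
      rw [G.card_neighborFinset_eq_degree w, hdeg w]
    rw [h0, h1', hb1, Finset.card_singleton] at hcard
    omega
  -- c 2 as common neighbour count for vertices at distance 2
  have hc2 : ∀ y : V, G.dist x y = 2 →
      ((G.neighborFinset y).filter (fun v => G.Adj x v)).card = c 2 := by
    intro y hy
    have h := hG.c_eq 2 hD x y hy
    rw [← h]
    refine congrArg Finset.card (Finset.filter_congr fun v _ => ?_)
    rw [show (G.dist x v + 1 = 2) ↔ (G.dist x v = 1) from by omega,
      SimpleGraph.dist_eq_one_iff_adj]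
  -- x has a neighbour
  have hnbr : ∀ w : V, x ≠ w → ∃ z, G.Adj x z := by
    intro w hw
    obtain ⟨pw⟩ := hconn.preconnected x w
    cases pw with
    | nil => exact absurd rfl hw
    | cons h _ => exact ⟨_, h⟩
  obtain ⟨u0, v0, huv0⟩ := hG.exists_dist
  have hune : u0 ≠ v0 := by
    intro h
    rw [h, SimpleGraph.dist_self] at huv0
    omega
  obtain ⟨z, hxz⟩ : ∃ z, G.Adj x z := by
    rcases eq_or_ne x u0 with rfl | h
    · exact hnbr v0 hune
    · exact hnbr u0 h
  -- cardinality of the edge set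
  have hcardE : Fintype.card S.edgeSet = b 0 := by
    rw [← Fintype.card_congr φ.toEquiv, SimpleGraph.card_neighborSet_eq_degree, hdeg x]
  -- translation of adjacency through φ
  have hiso' : ∀ a bb : G.neighborSet x, L.Adj (φ a) (φ bb) ↔ (a ≠ bb ∧ ¬ G.Adj ↑a ↑bb) := by
    intro a bb
    rw [φ.map_adj_iff]
    simp [SimpleGraph.localGraph]
  have hkey : ∀ a bb : G.neighborSet x, G.Adj ↑a ↑bb ↔ (a ≠ bb ∧ ¬ L.Adj (φ a) (φ bb)) := by
    intro a bb
    rw [hiso']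
    constructor
    · intro h
      have hne : a ≠ bb := fun hab => G.irrefl (by rw [hab] at h; exact h)
      exact ⟨hne, fun hc => hc.2 h⟩
    · rintro ⟨hab, h⟩
      by_contra hadj
      exact h ⟨hab, hadj⟩
  -- transport of cardinalities
  have htrans : ∀ (Q : V → Prop) [DecidablePred Q],
      ((G.neighborFinset x).filter (fun w => Q w)).card
        = ((univ : Finset (G.neighborSet x)).filter (fun (a : G.neighborSet x) => Q ↑a)).card := by
    intro Q _
    apply Finset.card_bij (fun (w : V) (hw : w ∈ (G.neighborFinset x).filter (fun w => Q w)) =>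
      (⟨w, (G.mem_neighborSet x w).mpr
        ((G.mem_neighborFinset x w).mp (Finset.mem_filter.mp hw).1)⟩ : G.neighborSet x))
    · intro w hw
      exact mem_filter.mpr ⟨mem_univ _, (Finset.mem_filter.mp hw).2⟩
    · intro w1 h1 w2 h2 h
      exact congrArg Subtype.val h
    · intro a ha
      refine ⟨↑a, ?_, Subtype.ext rfl⟩
      exact mem_filter.mpr ⟨(G.mem_neighborFinset x ↑a).mpr ((G.mem_neighborSet x ↑a).mp a.2),
        (mem_filter.mp ha).2⟩
  have htrans2 : ∀ (P : G.neighborSet x → Prop) (R : S.edgeSet → Prop)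
      [DecidablePred P] [DecidablePred R], (∀ a, P a ↔ R (φ a)) →
      ((univ : Finset (G.neighborSet x)).filter (fun (a : G.neighborSet x) => P a)).card
        = ((univ : Finset S.edgeSet).filter (fun e => R e)).card := by
    intro P R _ _ h
    apply Finset.card_equiv φ.toEquiv
    intro a
    simp only [mem_filter, mem_univ, true_and]
    exact h a
  set zT : G.neighborSet x := ⟨z, (G.mem_neighborSet x z).mpr hxz⟩ with hzT
  set zE : S.edgeSet := φ zT with hzE
  set NE : Finset S.edgeSet := L.neighborFinset zE with hNEdef
  have hNE : NE.card + 2 = 2 * t := lineGraph_card_neighborFinset S hreg zE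
  set DE : Finset S.edgeSet := (univ : Finset S.edgeSet).filter
    (fun e => e ≠ zE ∧ ¬L.Adj zE e) with hDEdef
  have hparts : DE.card + NE.card + 1 = b 0 := by
    have h1 : (univ : Finset S.edgeSet).filter (fun e => ¬(e ≠ zE ∧ ¬L.Adj zE e))
        = insert zE NE := by
      ext e
      simp only [mem_filter, mem_univ, true_and, mem_insert, hNEdef, mem_neighborFinset]
      tauto
    have h2 := Finset.card_filter_add_card_filter_not
      (s := (univ : Finset S.edgeSet)) (p := fun e => e ≠ zE ∧ ¬L.Adj zE e)
    have hznE : zE ∉ NE := by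
      rw [hNEdef, mem_neighborFinset]
      exact L.irrefl
    rw [h1, Finset.card_insert_of_notMem hznE, Finset.card_univ, hcardE] at h2
    rw [← hDEdef] at h2
    omega
  set Dz : Finset V := (G.neighborFinset x).filter (fun w => G.Adj z w) with hDzdef
  have hDzcard : Dz.card = DE.card := by
    rw [hDzdef, htrans (fun w => G.Adj z w)]
    refine htrans2 _ _ (fun a => ?_)
    rw [show G.Adj z ↑a ↔ G.Adj ↑zT ↑a from Iff.rfl, hkey zT a]
    constructor
    · rintro ⟨h1, h2⟩
      exact ⟨fun h => h1 (φ.injective h.symm), h2⟩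
    · rintro ⟨h1, h2⟩
      exact ⟨fun h => h1 (congrArg φ h).symm, h2⟩
  have ha1 : Dz.card + 1 + b 1 = b 0 := by
    have := hcomm z x hxz.symm
    rw [← hDzdef] at this
    exact this
  set F : Finset V := (G.neighborFinset z) \ (insert x (G.neighborFinset x)) with hFdef
  have hxDz : x ∉ Dz := by
    simp [hDzdef]
  have hGzsplit : G.neighborFinset z = insert x Dz ∪ F := by
    ext w
    simp only [hFdef, hDzdef, mem_union, mem_insert, mem_sdiff, mem_filter,
      mem_neighborFinset, not_or]
    constructor
    · intro hw
      by_cases h1 : w = x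
      · exact Or.inl (Or.inl h1)
      · by_cases h2 : G.Adj x w
        · exact Or.inl (Or.inr ⟨h2, hw⟩)
        · exact Or.inr ⟨hw, h1, h2⟩
    · rintro ((rfl | ⟨_, h⟩) | ⟨h, _⟩)
      · exact hxz.symm
      · exact h
      · exact h
  have hdisj : Disjoint (insert x Dz) F := by
    rw [Finset.disjoint_left]
    intro w hw hwF
    rw [hFdef, mem_sdiff] at hwF
    apply hwF.2
    rcases mem_insert.mp hw with rfl | h
    · exact mem_insert_self _ _
    · exact mem_insert_of_mem ((mem_filter.mp h).1)
  have hFcard : 1 + Dz.card + F.card = b 0 := by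
    have hcs := congrArg Finset.card hGzsplit
    rw [Finset.card_union_of_disjoint hdisj, Finset.card_insert_of_notMem hxDz,
      G.card_neighborFinset_eq_degree z, hdeg z] at hcs
    omega
  -- split of common neighbourhoods with z
  have hcommon_split : ∀ v : V, G.Adj z v →
      ((G.neighborFinset v).filter (fun w => G.Adj z w)).card
        = (({x} : Finset V).filter (fun w => G.Adj v w)).card
          + (Dz.filter (fun w => G.Adj v w)).card + (F.filter (fun w => G.Adj v w)).card := by
    intro v hv
    have h1 : (G.neighborFinset v).filter (fun w => G.Adj z w)
        = (G.neighborFinset z).filter (fun w => G.Adj v w) := by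
      ext w
      simp only [mem_filter, mem_neighborFinset]
      exact ⟨fun h => ⟨h.2, h.1⟩, fun h => ⟨h.2, h.1⟩⟩
    have hsd : Disjoint ({x} : Finset V) Dz := Finset.disjoint_singleton_left.mpr hxDz
    have hdisj' : Disjoint ({x} ∪ Dz : Finset V) F := by
      rw [← Finset.insert_eq]; exact hdisj
    rw [h1, hGzsplit, Finset.insert_eq, Finset.filter_union,
      Finset.card_union_of_disjoint (Finset.disjoint_filter_filter hdisj'),
      Finset.filter_union,
      Finset.card_union_of_disjoint (Finset.disjoint_filter_filter hsd)]
  -- facts about y ∈ F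
  have hyfacts : ∀ y ∈ F, G.Adj z y ∧ ¬ G.Adj x y ∧ y ≠ x := by
    intro y hy
    rw [hFdef, mem_sdiff] at hy
    simp only [mem_insert, mem_neighborFinset, not_or] at hy
    exact ⟨hy.1, hy.2.2, hy.2.1⟩
  have hdist2 : ∀ y ∈ F, G.dist x y = 2 := by
    intro y hy
    obtain ⟨h1, h2, h3⟩ := hyfacts y hy
    have hle : G.dist x y ≤ 2 := by
      calc G.dist x y ≤ G.dist x z + G.dist z y := hconn.dist_triangle
        _ = 2 := by
          rw [SimpleGraph.dist_eq_one_iff_adj.mpr hxz, SimpleGraph.dist_eq_one_iff_adj.mpr h1]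
    have h0 : G.dist x y ≠ 0 := fun h => h3 (hconn.dist_eq_zero_iff.mp h).symm
    have h1' : G.dist x y ≠ 1 := fun h => h2 (SimpleGraph.dist_eq_one_iff_adj.mp h)
    omega
  have hy_eq : ∀ y ∈ F, (Dz.filter (fun w => G.Adj y w)).card
      + (F.filter (fun w => G.Adj y w)).card + 1 + b 1 = b 0 := by
    intro y hy
    obtain ⟨h1, h2, _⟩ := hyfacts y hy
    have hc := hcomm z y h1
    rw [hcommon_split y h1] at hc
    have hxzero : (({x} : Finset V).filter (fun w => G.Adj y w)).card = 0 := by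
      rw [Finset.filter_singleton, if_neg (fun h => h2 h.symm)]
      rfl
    omega
  have hc2y : ∀ y ∈ F, 1 + (Dz.filter (fun w => G.Adj y w)).card ≤ c 2 := by
    intro y hy
    obtain ⟨h1, h2, _⟩ := hyfacts y hy
    rw [← hc2 y (hdist2 y hy)]
    have hznm : z ∉ Dz.filter (fun w => G.Adj y w) := by
      intro h
      exact G.irrefl (mem_filter.mp (mem_filter.mp h).1).2
    have hsub : insert z (Dz.filter (fun w => G.Adj y w)) ⊆
        (G.neighborFinset y).filter (fun v => G.Adj x v) := by
      intro w hw
      rcases mem_insert.mp hw with rfl | hw'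
      · exact mem_filter.mpr ⟨(G.mem_neighborFinset y w).mpr h1.symm, hxz⟩
      · obtain ⟨hwDz, hwy⟩ := mem_filter.mp hw'
        exact mem_filter.mpr ⟨(G.mem_neighborFinset y w).mpr hwy,
          (G.mem_neighborFinset x w).mp (mem_filter.mp hwDz).1⟩
    calc 1 + (Dz.filter (fun w => G.Adj y w)).card
        = (insert z (Dz.filter (fun w => G.Adj y w))).card := by
          rw [Finset.card_insert_of_notMem hznm]
          omega
      _ ≤ _ := Finset.card_le_card hsub
  -- the ε function (number of common line-graph neighbours with zE)
  set efun : V → ℕ := fun w => if h : G.Adj x w then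
    (NE ∩ L.neighborFinset (φ ⟨w, (G.mem_neighborSet x w).mpr h⟩)).card else 0 with hefun
  have hw_eq1 : ∀ w ∈ Dz, (Dz.filter (fun v => G.Adj w v)).card
      + (F.filter (fun v => G.Adj w v)).card + 2 + b 1 = b 0 := by
    intro w hw
    obtain ⟨hwx', hwz⟩ := mem_filter.mp hw
    have hwx : G.Adj x w := (G.mem_neighborFinset x w).mp hwx'
    have hc := hcomm z w hwz
    rw [hcommon_split w hwz] at hc
    have hxone : (({x} : Finset V).filter (fun v => G.Adj w v)).card = 1 := by
      rw [Finset.filter_singleton, if_pos hwx.symm, Finset.card_singleton]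
    omega
  have hw_eq2 : ∀ w ∈ Dz, (Dz.filter (fun v => G.Adj w v)).card
      + 2 * NE.card + 2 = b 0 + efun w := by
    intro w hw
    obtain ⟨hwx', hwz⟩ := mem_filter.mp hw
    have hwx : G.Adj x w := (G.mem_neighborFinset x w).mp hwx'
    set wT : G.neighborSet x := ⟨w, (G.mem_neighborSet x w).mpr hwx⟩ with hwT
    set wE : S.edgeSet := φ wT with hwE
    have hzw : zT ≠ wT ∧ ¬ L.Adj zE wE := by
      rw [hzE, hwE]
      exact (hkey zT wT).mp hwz
    have hne : zE ≠ wE := by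
      rw [hzE, hwE]
      exact fun h => hzw.1 (φ.injective h)
    have hp : (Dz.filter (fun v => G.Adj w v)).card = ((univ : Finset S.edgeSet).filter
        (fun e => (e ≠ zE ∧ ¬L.Adj zE e) ∧ (e ≠ wE ∧ ¬L.Adj wE e))).card := by
      have e1 : Dz.filter (fun v => G.Adj w v)
          = (G.neighborFinset x).filter (fun v => G.Adj z v ∧ G.Adj w v) := by
        rw [hDzdef, Finset.filter_filter]
      rw [e1, htrans (fun v => G.Adj z v ∧ G.Adj w v)]
      refine htrans2 _ _ (fun a => ?_)
      rw [hzE, hwE]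
      rw [show G.Adj z ↑a ↔ G.Adj ↑zT ↑a from Iff.rfl, hkey zT a,
        show G.Adj w ↑a ↔ G.Adj ↑wT ↑a from Iff.rfl, hkey wT a]
      constructor
      · rintro ⟨⟨ha1, ha2⟩, ⟨hb1, hb2⟩⟩
        exact ⟨⟨fun h => ha1 (φ.injective h.symm), ha2⟩,
          ⟨fun h => hb1 (φ.injective h.symm), hb2⟩⟩
      · rintro ⟨⟨ha1, ha2⟩, ⟨hb1, hb2⟩⟩
        exact ⟨⟨fun h => ha1 (congrArg φ h).symm, ha2⟩,
          ⟨fun h => hb1 (congrArg φ h).symm, hb2⟩⟩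
    have hB := card_common_nonnbrs L hne hzw.2
    rw [hcardE] at hB
    rw [← hNEdef] at hB
    have hU := Finset.card_union_add_card_inter NE (L.neighborFinset wE)
    have hNw : (L.neighborFinset wE).card + 2 = 2 * t := lineGraph_card_neighborFinset S hreg wE
    have he : efun w = (NE ∩ L.neighborFinset wE).card := by
      rw [hefun]
      simp only
      rw [dif_pos hwx, hwE, hwT]
    rw [hp]
    omega
  -- transport of the ε-sum to the line graph side
  have hsum_e : ∑ w ∈ Dz, efun w = ∑ e ∈ DE, (NE ∩ L.neighborFinset e).card := by
    apply Finset.sum_bij (fun (w : V) (hw : w ∈ Dz) =>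
      φ ⟨w, (G.mem_neighborSet x w).mpr ((G.mem_neighborFinset x w).mp (mem_filter.mp hw).1)⟩)
    · intro w hw
      obtain ⟨hwx', hwz⟩ := mem_filter.mp hw
      have hwx : G.Adj x w := (G.mem_neighborFinset x w).mp hwx'
      have hzw := (hkey zT ⟨w, (G.mem_neighborSet x w).mpr hwx⟩).mp hwz
      rw [hDEdef, mem_filter]
      refine ⟨mem_univ _, ?_, ?_⟩
      · intro h
        rw [hzE] at h
        exact hzw.1 (φ.injective h.symm)
      · rw [hzE]
        exact hzw.2
    · intro w1 h1 w2 h2 heq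
      exact congrArg Subtype.val (φ.injective heq)
    · intro e he
      rw [hDEdef, mem_filter] at he
      obtain ⟨-, hnez, hnadj⟩ := he
      have hxw : G.Adj x ↑(φ.symm e) := (G.mem_neighborSet x _).mp (φ.symm e).2
      refine ⟨↑(φ.symm e), ?_, ?_⟩
      · rw [hDzdef, mem_filter]
        refine ⟨(G.mem_neighborFinset x _).mpr hxw, ?_⟩
        refine (hkey zT (φ.symm e)).mpr ⟨?_, ?_⟩
        · intro h
          apply hnez
          rw [hzE, h, φ.apply_symm_apply]
        · rw [φ.apply_symm_apply]
          rw [hzE] at hnadj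
          exact hnadj
      · exact (congrArg φ (Subtype.ext rfl)).trans (φ.apply_symm_apply e)
    · intro w hw
      obtain ⟨hwx', _⟩ := mem_filter.mp hw
      have hwx : G.Adj x w := (G.mem_neighborFinset x w).mp hwx'
      rw [hefun]
      simp only
      rw [dif_pos hwx]
  -- double counting the edges between F and Dz
  have hdouble : ∑ y ∈ F, (Dz.filter (fun w => G.Adj y w)).card
      = ∑ w ∈ Dz, (F.filter (fun v => G.Adj w v)).card :=
    sum_card_filter_adj_comm G F Dz
  -- summed versions of the pointwise identities
  have hsum1 : ∑ y ∈ F, ((Dz.filter (fun w => G.Adj y w)).card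
      + (F.filter (fun w => G.Adj y w)).card + 1 + b 1) = ∑ _y ∈ F, b 0 :=
    Finset.sum_congr rfl hy_eq
  have hsum3 : ∑ w ∈ Dz, ((Dz.filter (fun v => G.Adj w v)).card
      + (F.filter (fun v => G.Adj w v)).card + 2 + b 1) = ∑ _w ∈ Dz, b 0 :=
    Finset.sum_congr rfl hw_eq1
  have hsum4 : ∑ w ∈ Dz, ((Dz.filter (fun v => G.Adj w v)).card
      + 2 * NE.card + 2) = ∑ w ∈ Dz, (b 0 + efun w) :=
    Finset.sum_congr rfl hw_eq2
  simp only [Finset.sum_add_distrib, Finset.sum_const, smul_eq_mul, mul_one] at hsum1 hsum3 hsum4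
  -- the ε-sum bound
  have hse_bound : ∑ w ∈ Dz, efun w ≤ NE.card * (t - 1) := by
    rw [hsum_e]
    have h := lineGraph_sum_common_bound S hreg zE
    rw [← hNEdef] at h
    rw [← hDEdef] at h
    exact h
  -- scalar identities
  have hFN : F.card = NE.card := by omega
  have hFne : F.Nonempty := by
    rw [← Finset.card_pos]
    omega
  -- pass to ℤ and compute ∑ m = ∑ ε
  have hz1 : (∑ y ∈ F, ((Dz.filter (fun w => G.Adj y w)).card : ℤ))
      + (∑ y ∈ F, ((F.filter (fun w => G.Adj y w)).card : ℤ))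
      + F.card + F.card * b 1 = F.card * b 0 := by
    exact_mod_cast hsum1
  have hz2 : (∑ y ∈ F, ((Dz.filter (fun w => G.Adj y w)).card : ℤ))
      = ∑ w ∈ Dz, ((F.filter (fun v => G.Adj w v)).card : ℤ) := by
    exact_mod_cast hdouble
  have hz3 : (∑ w ∈ Dz, ((Dz.filter (fun v => G.Adj w v)).card : ℤ))
      + (∑ w ∈ Dz, ((F.filter (fun v => G.Adj w v)).card : ℤ))
      + Dz.card * 2 + Dz.card * b 1 = Dz.card * b 0 := by
    exact_mod_cast hsum3
  have hz4 : (∑ w ∈ Dz, ((Dz.filter (fun v => G.Adj w v)).card : ℤ))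
      + Dz.card * (2 * NE.card) + Dz.card * 2
      = Dz.card * b 0 + ∑ w ∈ Dz, (efun w : ℤ) := by
    exact_mod_cast hsum4
  have hzB1 : (b 1 : ℤ) = NE.card := by
    have : b 1 = NE.card := by omega
    exact_mod_cast this
  have hzF : (F.card : ℤ) = NE.card := by exact_mod_cast hFN
  have hzK : (b 0 : ℤ) = Dz.card + NE.card + 1 := by
    have : b 0 = Dz.card + NE.card + 1 := by omega
    exact_mod_cast this
  rw [hzB1] at hz1 hz3
  rw [hzF] at hz1
  rw [hzK] at hz1 hz3 hz4
  have hSmSe : (∑ y ∈ F, ((F.filter (fun w => G.Adj y w)).card : ℤ))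
      = ∑ w ∈ Dz, (efun w : ℤ) := by
    linear_combination hz1 - hz2 - hz3 + hz4
  -- find a good y
  have hSm_le : ∑ y ∈ F, ((F.filter (fun w => G.Adj y w)).card : ℤ)
      ≤ ∑ _y ∈ F, ((t : ℤ) - 1) := by
    rw [Finset.sum_const, nsmul_eq_mul]
    rw [hSmSe]
    have hcast : ((∑ w ∈ Dz, efun w : ℕ) : ℤ) ≤ ((NE.card * (t - 1) : ℕ) : ℤ) := by
      exact_mod_cast hse_bound
    push_cast at hcast
    have htc : ((t - 1 : ℕ) : ℤ) = (t : ℤ) - 1 := by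
      have : 1 ≤ t := by omega
      push_cast [this]
      ring
    rw [htc] at hcast
    calc ∑ w ∈ Dz, (efun w : ℤ) ≤ (NE.card : ℤ) * ((t : ℤ) - 1) := hcast
      _ = (F.card : ℤ) * ((t : ℤ) - 1) := by rw [hzF]
  obtain ⟨y0, hy0F, hy0⟩ := Finset.exists_le_of_sum_le hFne hSm_le
  have hfin1 := hy_eq y0 hy0F
  have hfin2 := hc2y y0 hy0F
  have hzf1 : ((Dz.filter (fun w => G.Adj y0 w)).card : ℤ)
      + ((F.filter (fun w => G.Adj y0 w)).card : ℤ) + 1 + b 1 = b 0 := by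
    exact_mod_cast hfin1
  have hzf2 : 1 + ((Dz.filter (fun w => G.Adj y0 w)).card : ℤ) ≤ c 2 := by
    exact_mod_cast hfin2
  have hzNE : (NE.card : ℤ) + 2 = 2 * t := by exact_mod_cast hNE
  rw [hzB1] at hzf1
  linarith
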